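/- The function ψ is well defined and continuous on the closed rectangle R = [0,π] × [0,y_∞]; it vanishes identically on the topological boundary of R; it is C^∞ on the open rectangle (0,π) × (0,y_∞); for each k ≥ 0 the restriction of ψ to [0,π] × [y_k, y_{k+1}] is Lipschitz; and for every k ≥ 0 one has |ψ(x,y)| ≤ 2·h^k whenever x ∈ [0,π] and y_k ≤ y ≤ y_∞ (in particular ψ(·,y) → 0 uniformly as y → y_∞). -/

import Mathlib

open Real MeasureTheory Set Filter

noncomputable section

namespace StokesCounterexample

/-- `ySeq a k = Σ_{j=1}^k a^j` (so `ySeq a 0 = 0`). -/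
def ySeq (a : ℝ) (k : ℕ) : ℝ := ∑ j ∈ Finset.range k, a ^ (j + 1)

/-- `yInf a = Σ_{j=1}^∞ a^j = a / (1 - a)`. -/
def yInf (a : ℝ) : ℝ := a / (1 - a)

/-- `fSeq h l 0 = 0` and `fSeq h l k x = h^k · sin (x / l^k)` for `k ≥ 1`. -/
def fSeq (h l : ℝ) (k : ℕ) (x : ℝ) : ℝ :=
  if k = 0 then 0 else h ^ k * Real.sin (x / l ^ k)

open Classical in
/-- The interpolation `ψ(x,y) = (1 - φ_k(y))·f_k(x) + φ_k(y)·f_{k+1}(x)` for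
`y ∈ [y_k, y_{k+1})`, where `φ_k(y) = φ((y - y_k)/a^(k+1))`, extended by `0`
outside of `⋃_k [y_k, y_{k+1})` (in particular `ψ(x, y_∞) = 0`). -/
def psi (a h l : ℝ) (φ : ℝ → ℝ) (x y : ℝ) : ℝ :=
  if hk : ∃ k : ℕ, ySeq a k ≤ y ∧ y < ySeq a (k + 1) then
    (1 - φ ((y - ySeq a hk.choose) / a ^ (hk.choose + 1))) * fSeq h l hk.choose x
      + φ ((y - ySeq a hk.choose) / a ^ (hk.choose + 1)) * fSeq h l (hk.choose + 1) x
  else 0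

/-- The partial derivative of `ψ` in the first variable. -/
def psi₁ (a h l : ℝ) (φ : ℝ → ℝ) (x y : ℝ) : ℝ :=
  deriv (fun t => psi a h l φ t y) x

/-- The partial derivative of `ψ` in the second variable. -/
def psi₂ (a h l : ℝ) (φ : ℝ → ℝ) (x y : ℝ) : ℝ :=
  deriv (fun s => psi a h l φ x s) y

/-- The arc length `L(x,y) = ∫_0^x √(1 + (∂₁ψ(t,y))²) dt`. -/
def arc (a h l : ℝ) (φ : ℝ → ℝ) (x y : ℝ) : ℝ :=
  ∫ t in (0:ℝ)..x, Real.sqrt (1 + psi₁ a h l φ t y ^ 2)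

/-- The length `L(y) = L(π, y)` of the section of the graph of `ψ` at height `y`. -/
def len (a h l : ℝ) (φ : ℝ → ℝ) (y : ℝ) : ℝ := arc a h l φ π y

variable {a h l : ℝ} {φ : ℝ → ℝ}

lemma ySeq_zero : ySeq a 0 = 0 := by simp [ySeq]

lemma ySeq_succ (k : ℕ) : ySeq a (k + 1) = ySeq a k + a ^ (k + 1) := by
  simp [ySeq, Finset.sum_range_succ]

lemma ySeq_nonneg (ha0 : 0 < a) (k : ℕ) : 0 ≤ ySeq a k :=
  Finset.sum_nonneg fun j _ => pow_nonneg ha0.le _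

lemma ySeq_strictMono (ha0 : 0 < a) : StrictMono (ySeq a) :=
  strictMono_nat_of_lt_succ fun k => by
    rw [ySeq_succ]; nlinarith [pow_pos ha0 (k + 1)]

lemma yInf_eq (ha1 : a < 1) (k : ℕ) : yInf a = ySeq a k + a ^ (k + 1) / (1 - a) := by
  induction k with
  | zero => simp [yInf, ySeq_zero]
  | succ n ih =>
    rw [ySeq_succ, ih]
    have h1 : (1 : ℝ) - a ≠ 0 := by linarith
    field_simp
    ring

lemma ySeq_lt_yInf (ha0 : 0 < a) (ha1 : a < 1) (k : ℕ) : ySeq a k < yInf a := by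
  rw [yInf_eq ha1 k]
  have : 0 < a ^ (k + 1) / (1 - a) := div_pos (pow_pos ha0 _) (by linarith)
  linarith

lemma exists_index (ha0 : 0 < a) (ha1 : a < 1) {y : ℝ} (h0 : 0 ≤ y) (h1 : y < yInf a) :
    ∃ k : ℕ, ySeq a k ≤ y ∧ y < ySeq a (k + 1) := by
  classical
  have hex : ∃ n : ℕ, y < ySeq a n := by
    obtain ⟨n, hn⟩ := exists_pow_lt_of_lt_one (x := (yInf a - y) * (1 - a))
      (by nlinarith) ha1
    refine ⟨n, ?_⟩
    have h1a : (0:ℝ) < 1 - a := by linarith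
    have : a ^ (n + 1) ≤ a ^ n := by
      calc a ^ (n+1) = a ^ n * a := by ring
      _ ≤ a ^ n * 1 := by nlinarith [pow_nonneg ha0.le n]
      _ = a ^ n := by ring
    have h2 : a ^ (n + 1) / (1 - a) < yInf a - y := by
      rw [div_lt_iff₀ h1a]; nlinarith
    have := yInf_eq (a := a) ha1 n
    linarith
  have h0' : ¬ y < ySeq a 0 := by rw [ySeq_zero]; linarith
  have hm : y < ySeq a (Nat.find hex) := Nat.find_spec hex
  have hm0 : Nat.find hex ≠ 0 := by intro hc; rw [hc] at hm; exact h0' hm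
  obtain ⟨j, hj⟩ := Nat.exists_eq_succ_of_ne_zero hm0
  rw [hj] at hm
  refine ⟨j, ?_, hm⟩
  have := Nat.find_min hex (show j < Nat.find hex by omega)
  exact not_lt.mp this

lemma index_unique (ha0 : 0 < a) {y : ℝ} {k j : ℕ}
    (hk : ySeq a k ≤ y ∧ y < ySeq a (k + 1)) (hj : ySeq a j ≤ y ∧ y < ySeq a (j + 1)) :
    k = j := by
  by_contra hne
  have mono := (ySeq_strictMono (a := a) ha0).monotone
  rcases Nat.lt_or_ge k j with hlt | hge
  · have : ySeq a (k + 1) ≤ ySeq a j := mono hlt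
    linarith [hk.2, hj.1]
  · have hlt : j < k := lt_of_le_of_ne hge (Ne.symm hne)
    have : ySeq a (j + 1) ≤ ySeq a k := mono hlt
    linarith [hj.2, hk.1]

lemma psi_eq (ha0 : 0 < a) {y : ℝ} {k : ℕ} (hk : ySeq a k ≤ y ∧ y < ySeq a (k + 1)) (x : ℝ) :
    psi a h l φ x y = (1 - φ ((y - ySeq a k) / a ^ (k + 1))) * fSeq h l k x
      + φ ((y - ySeq a k) / a ^ (k + 1)) * fSeq h l (k + 1) x := by
  have hex : ∃ k : ℕ, ySeq a k ≤ y ∧ y < ySeq a (k + 1) := ⟨k, hk⟩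
  rw [psi, dif_pos hex, index_unique ha0 hex.choose_spec hk]

lemma psi_zero_of_ge (ha0 : 0 < a) (ha1 : a < 1) {y : ℝ} (hy : yInf a ≤ y) (x : ℝ) :
    psi a h l φ x y = 0 := by
  rw [psi, dif_neg]
  rintro ⟨k, _, hk2⟩
  exact absurd hk2 (not_lt.2 (le_trans (ySeq_lt_yInf ha0 ha1 (k + 1)).le hy))

lemma psi_zero_of_neg (ha0 : 0 < a) {y : ℝ} (hy : y < 0) (x : ℝ) :
    psi a h l φ x y = 0 := by
  rw [psi, dif_neg]
  rintro ⟨k, hk1, _⟩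
  linarith [ySeq_nonneg (a := a) ha0 k]


lemma abs_fSeq_le (hh0 : 0 < h) (k : ℕ) (x : ℝ) : |fSeq h l k x| ≤ h ^ k := by
  rcases Nat.eq_zero_or_pos k with hk | hk
  · subst hk; simp [fSeq]
  · rw [fSeq, if_neg (by omega)]
    rw [abs_mul, abs_of_pos (pow_pos hh0 k)]
    calc h ^ k * |Real.sin (x / l ^ k)| ≤ h ^ k * 1 :=
      mul_le_mul_of_nonneg_left (Real.abs_sin_le_one _) (pow_pos hh0 k).le
    _ = h ^ k := mul_one _

lemma abs_psi_le (ha0 : 0 < a) (hh0 : 0 < h) (hh1 : h < 1)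
    (hφ01 : ∀ t, φ t ∈ Set.Icc (0:ℝ) 1) {k : ℕ} {y : ℝ} (hy : ySeq a k ≤ y) (x : ℝ) :
    |psi a h l φ x y| ≤ 2 * h ^ k := by
  by_cases hex : ∃ j : ℕ, ySeq a j ≤ y ∧ y < ySeq a (j + 1)
  · obtain ⟨j, hj⟩ := hex
    have hjk : k ≤ j := by
      by_contra hc
      have : ySeq a (j + 1) ≤ ySeq a k :=
        (ySeq_strictMono (a := a) ha0).monotone (by omega)
      linarith [hj.2]
    rw [psi_eq ha0 hj x]
    have hφy := hφ01 ((y - ySeq a j) / a ^ (j + 1))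
    have h1 : |fSeq h l j x| ≤ h ^ j := abs_fSeq_le hh0 j x
    have h2 : |fSeq h l (j + 1) x| ≤ h ^ (j + 1) := abs_fSeq_le hh0 (j + 1) x
    have h3 : h ^ (j + 1) ≤ h ^ j := pow_le_pow_of_le_one hh0.le hh1.le (by omega)
    have h4 : h ^ j ≤ h ^ k := pow_le_pow_of_le_one hh0.le hh1.le hjk
    set t := φ ((y - ySeq a j) / a ^ (j + 1))
    calc |(1 - t) * fSeq h l j x + t * fSeq h l (j + 1) x|
        ≤ |(1 - t) * fSeq h l j x| + |t * fSeq h l (j + 1) x| := abs_add_le _ _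
      _ = |1 - t| * |fSeq h l j x| + |t| * |fSeq h l (j + 1) x| := by rw [abs_mul, abs_mul]
      _ ≤ 1 * h ^ j + 1 * h ^ j := by
          have ht1 : |1 - t| ≤ 1 := by
            rw [abs_le]; exact ⟨by linarith [hφy.2], by linarith [hφy.1]⟩
          have ht2 : |t| ≤ 1 := by
            rw [abs_le]; exact ⟨by linarith [hφy.1], by linarith [hφy.2]⟩
          have b1 : |1 - t| * |fSeq h l j x| ≤ 1 * h ^ j :=
            mul_le_mul ht1 h1 (abs_nonneg _) one_pos.le
          have b2 : |t| * |fSeq h l (j + 1) x| ≤ 1 * h ^ j :=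
            mul_le_mul ht2 (h2.trans h3) (abs_nonneg _) one_pos.le
          linarith
      _ = 2 * h ^ j := by ring
      _ ≤ 2 * h ^ k := by linarith
  · rw [psi, dif_neg hex]
    have : (0:ℝ) ≤ 2 * h ^ k := by positivity
    simpa using this

lemma fSeq_smooth (k : ℕ) : ContDiff ℝ (⊤ : ℕ∞) (fSeq h l k) := by
  cases k with
  | zero => rw [show fSeq h l 0 = fun _ => (0:ℝ) from funext fun x => by simp [fSeq]]; exact contDiff_const
  | succ n =>
    have : fSeq h l (n + 1) = fun x => h ^ (n + 1) * Real.sin (x / l ^ (n + 1)) := by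
      funext x; rw [fSeq, if_neg (by omega)]
    rw [this]
    exact contDiff_const.mul (Real.contDiff_sin.comp (contDiff_id.div_const _))

def gAux (a h l : ℝ) (φ : ℝ → ℝ) (k : ℕ) (p : ℝ × ℝ) : ℝ :=
  (1 - φ ((p.2 - ySeq a k) / a ^ (k + 1))) * fSeq h l k p.1
    + φ ((p.2 - ySeq a k) / a ^ (k + 1)) * fSeq h l (k + 1) p.1

lemma gAux_smooth (hφ : ContDiff ℝ (⊤ : ℕ∞) φ) (k : ℕ) :
    ContDiff ℝ (⊤ : ℕ∞) (gAux a h l φ k) := by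
  have hφk : ContDiff ℝ (⊤ : ℕ∞) (fun p : ℝ × ℝ => φ ((p.2 - ySeq a k) / a ^ (k + 1))) :=
    hφ.comp ((contDiff_snd.sub contDiff_const).div_const _)
  exact ((contDiff_const.sub hφk).mul ((fSeq_smooth k).comp contDiff_fst)).add
    (hφk.mul ((fSeq_smooth (k + 1)).comp contDiff_fst))

lemma psi_eq_gAux (ha0 : 0 < a) (ha1 : a < 1)
    (hφ0 : ∃ ε > 0, ∀ t < ε, φ t = 0) (hφ1 : ∃ ε > 0, ∀ t > 1 - ε, φ t = 1) (k : ℕ) :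
    ∃ δ > 0, ∀ x y : ℝ, y ∈ Ioo (ySeq a k - δ) (ySeq a (k + 1) + δ) →
      psi a h l φ x y = gAux a h l φ k (x, y) := by
  obtain ⟨ε0, hε0, h0⟩ := hφ0
  obtain ⟨ε1, hε1, h1⟩ := hφ1
  set ε := min (min ε0 ε1) 1 with hεdef
  have hεpos : 0 < ε := lt_min (lt_min hε0 hε1) one_pos
  have hεε0 : ε ≤ ε0 := (min_le_left _ _).trans (min_le_left _ _)
  have hεε1 : ε ≤ ε1 := (min_le_left _ _).trans (min_le_right _ _)
  have hεone : ε ≤ 1 := min_le_right _ _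
  have hpow : ∀ m : ℕ, (0:ℝ) < a ^ m := fun m => pow_pos ha0 m
  refine ⟨ε * a ^ (k + 2), by positivity, ?_⟩
  intro x y hy
  obtain ⟨hy1, hy2⟩ := hy
  have ha2lt : a ^ 2 < 1 := by nlinarith
  rcases lt_or_ge y (ySeq a k) with hlt | hge
  · -- y < y_k : previous strip (or negative)
    have hφ0val : φ ((y - ySeq a k) / a ^ (k + 1)) = 0 := by
      apply h0
      have : y - ySeq a k < 0 := by linarith
      calc (y - ySeq a k) / a ^ (k + 1) < 0 := div_neg_of_neg_of_pos this (hpow _)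
        _ < ε0 := hε0
    cases k with
    | zero =>
      have hyneg : y < 0 := by rw [ySeq_zero] at hlt; exact hlt
      rw [psi_zero_of_neg ha0 hyneg, gAux, hφ0val]
      simp [fSeq]
    | succ j =>
      have hjy : ySeq a j ≤ y := by
        have h1' : ySeq a (j + 1) = ySeq a j + a ^ (j + 1) := ySeq_succ j
        have h2' : ε * a ^ (j + 3) < a ^ (j + 1) := by
          have : a ^ (j + 3) = a ^ (j + 1) * a ^ 2 := by ring
          nlinarith [hpow (j + 1), hpow (j+3)]
        have : ySeq a (j + 1) - ε * a ^ (j + 1 + 2) < y := hy1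
        nlinarith
      have hk' : ySeq a j ≤ y ∧ y < ySeq a (j + 1) := ⟨hjy, hlt⟩
      rw [psi_eq ha0 hk' x]
      have hφ1val : φ ((y - ySeq a j) / a ^ (j + 1)) = 1 := by
        apply h1
        have h1' : ySeq a (j + 1) = ySeq a j + a ^ (j + 1) := ySeq_succ j
        have hby : ySeq a (j + 1) - ε * a ^ (j + 1 + 2) < y := hy1
        have h3' : ε * a ^ (j + 1 + 2) < ε1 * a ^ (j + 1) := by
          have he : a ^ (j + 1 + 2) = a ^ (j + 1) * a ^ 2 := by ring
          nlinarith [hpow (j + 1), mul_le_mul_of_nonneg_right hεε1 (hpow (j + 1)).le]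
        rw [gt_iff_lt, lt_div_iff₀ (hpow (j + 1))]
        nlinarith
      rw [hφ1val]
      simp only [gAux, hφ0val]
      ring
  · rcases lt_or_ge y (ySeq a (k + 1)) with hlt2 | hge2
    · exact psi_eq ha0 ⟨hge, hlt2⟩ x
    · -- y ∈ [y_{k+1}, y_{k+1} + δ) : next strip
      have hlt3 : y < ySeq a (k + 1 + 1) := by
        have h1' : ySeq a (k + 1 + 1) = ySeq a (k + 1) + a ^ (k + 1 + 1) := ySeq_succ (k + 1)
        have he : a ^ (k + 2) = a ^ (k + 1 + 1) := by ring
        nlinarith [hpow (k + 1 + 1)]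
      rw [psi_eq ha0 ⟨hge2, hlt3⟩ x]
      have hφ0val : φ ((y - ySeq a (k + 1)) / a ^ (k + 1 + 1)) = 0 := by
        apply h0
        rw [div_lt_iff₀ (hpow (k + 1 + 1))]
        have hm : ε * a ^ (k + 1 + 1) ≤ ε0 * a ^ (k + 1 + 1) :=
          mul_le_mul_of_nonneg_right hεε0 (hpow _).le
        have he : a ^ (k + 2) = a ^ (k + 1 + 1) := by ring
        nlinarith
      have hφ1val : φ ((y - ySeq a k) / a ^ (k + 1)) = 1 := by
        apply h1
        have h1' : ySeq a (k + 1) = ySeq a k + a ^ (k + 1) := ySeq_succ k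
        have : (1:ℝ) ≤ (y - ySeq a k) / a ^ (k + 1) := by
          rw [le_div_iff₀ (hpow (k + 1))]; nlinarith
        linarith
      rw [hφ0val]
      simp only [gAux, hφ1val]
      ring


lemma psi_eventuallyEq_gAux (ha0 : 0 < a) (ha1 : a < 1)
    (hφ0 : ∃ ε > 0, ∀ t < ε, φ t = 0) (hφ1 : ∃ ε > 0, ∀ t > 1 - ε, φ t = 1) {k : ℕ}
    {p : ℝ × ℝ} (hk : ySeq a k ≤ p.2 ∧ p.2 < ySeq a (k + 1)) :
    (fun q : ℝ × ℝ => psi a h l φ q.1 q.2) =ᶠ[nhds p] gAux a h l φ k := by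
  obtain ⟨δ, hδ, heq⟩ := psi_eq_gAux ha0 ha1 hφ0 hφ1 k
  have hop : IsOpen {q : ℝ × ℝ | ySeq a k - δ < q.2 ∧ q.2 < ySeq a (k + 1) + δ} :=
    (isOpen_lt continuous_const continuous_snd).inter
      (isOpen_lt continuous_snd continuous_const)
  have hmem : p ∈ {q : ℝ × ℝ | ySeq a k - δ < q.2 ∧ q.2 < ySeq a (k + 1) + δ} :=
    ⟨by linarith [hk.1], by linarith [hk.2]⟩
  filter_upwards [hop.mem_nhds hmem] with q hq
  simpa using heq q.1 q.2 ⟨hq.1, hq.2⟩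

theorem psi_basic_properties' (a h l : ℝ) (ha0 : 0 < a) (ha1 : a < 1) (hh0 : 0 < h) (hh1 : h < 1)
    (hl0 : 0 < l) (hl1 : l < 1) (hlN : ∃ N : ℕ, 0 < N ∧ l = 1 / N)
    (φ : ℝ → ℝ) (hφsmooth : ContDiff ℝ (⊤ : ℕ∞) φ) (hφmono : Monotone φ)
    (hφ01 : ∀ t, φ t ∈ Set.Icc (0:ℝ) 1)
    (hφd0 : ∀ t, 0 ≤ deriv φ t) (hφd2 : ∀ t, deriv φ t ≤ 2)
    (hφ0 : ∃ ε > 0, ∀ t < ε, φ t = 0) (hφ1 : ∃ ε > 0, ∀ t > 1 - ε, φ t = 1) :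
    ContinuousOn (fun p : ℝ × ℝ => psi a h l φ p.1 p.2) (Icc 0 π ×ˢ Icc 0 (yInf a)) ∧
    (∀ p ∈ frontier (Icc 0 π ×ˢ Icc 0 (yInf a) : Set (ℝ × ℝ)), psi a h l φ p.1 p.2 = 0) ∧
    ContDiffOn ℝ (⊤ : ℕ∞) (fun p : ℝ × ℝ => psi a h l φ p.1 p.2)
      (Ioo 0 π ×ˢ Ioo 0 (yInf a)) ∧
    (∀ k : ℕ, ∃ K : NNReal, LipschitzOnWith K (fun p : ℝ × ℝ => psi a h l φ p.1 p.2)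
      (Icc 0 π ×ˢ Icc (ySeq a k) (ySeq a (k + 1)))) ∧
    (∀ k : ℕ, ∀ x ∈ Icc (0:ℝ) π, ∀ y : ℝ, ySeq a k ≤ y → y ≤ yInf a →
      |psi a h l φ x y| ≤ 2 * h ^ k) := by
  obtain ⟨N, hN, hlNe⟩ := hlN
  obtain ⟨ε0, hε0p, h0φ⟩ := id hφ0
  have h0pi : (0:ℝ) < π := Real.pi_pos
  have hyInfpos : 0 < yInf a := by
    have := ySeq_lt_yInf (a := a) ha0 ha1 0
    rwa [ySeq_zero] at this
  -- continuity at interior heights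
  have hcontAt : ∀ p : ℝ × ℝ, 0 ≤ p.2 → p.2 < yInf a →
      ContinuousAt (fun q : ℝ × ℝ => psi a h l φ q.1 q.2) p := by
    intro p hp0 hp1
    obtain ⟨k, hk⟩ := exists_index ha0 ha1 hp0 hp1
    exact ((gAux_smooth hφsmooth k).continuous.continuousAt).congr
      (psi_eventuallyEq_gAux ha0 ha1 hφ0 hφ1 hk).symm
  -- continuity at the top row
  have hcontTop : ∀ x₀ : ℝ,
      ContinuousAt (fun q : ℝ × ℝ => psi a h l φ q.1 q.2) (x₀, yInf a) := by
    intro x₀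
    have hF0 : psi a h l φ x₀ (yInf a) = 0 := psi_zero_of_ge ha0 ha1 le_rfl x₀
    rw [ContinuousAt]
    simp only [hF0]
    rw [Metric.tendsto_nhds]
    intro ε hε
    obtain ⟨k, hk⟩ := exists_pow_lt_of_lt_one (x := ε / 2) (by linarith) hh1
    have hop : IsOpen {q : ℝ × ℝ | ySeq a k < q.2} :=
      isOpen_lt continuous_const continuous_snd
    have hmem : (x₀, yInf a) ∈ {q : ℝ × ℝ | ySeq a k < q.2} := ySeq_lt_yInf ha0 ha1 k
    filter_upwards [hop.mem_nhds hmem] with q hq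
    have hb := abs_psi_le (l := l) (φ := φ) ha0 hh0 hh1 hφ01 (le_of_lt hq) q.1
    rw [Real.dist_eq, sub_zero]
    calc |psi a h l φ q.1 q.2| ≤ 2 * h ^ k := hb
      _ < ε := by linarith
  -- psi vanishes for x = 0 and x = π
  have hfx0 : ∀ k, fSeq h l k (0:ℝ) = 0 := by
    intro k
    rcases Nat.eq_zero_or_pos k with hk | hk
    · subst hk; simp [fSeq]
    · rw [fSeq, if_neg (by omega)]; simp
  have hfxpi : ∀ k, fSeq h l k π = 0 := by
    intro k
    rcases Nat.eq_zero_or_pos k with hk | hk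
    · subst hk; simp [fSeq]
    · rw [fSeq, if_neg (by omega)]
      have hN0 : (N:ℝ) ≠ 0 := Nat.cast_ne_zero.mpr hN.ne'
      have hdiv : π / l ^ k = ((N ^ k : ℕ) : ℝ) * π := by
        rw [hlNe, div_pow, one_pow, div_div_eq_mul_div, div_one]; push_cast; ring
      rw [hdiv, Real.sin_nat_mul_pi, mul_zero]
  have hpsixval : ∀ x : ℝ, (∀ k, fSeq h l k x = 0) → ∀ y : ℝ, psi a h l φ x y = 0 := by
    intro x hx y
    rw [psi]
    split
    · rw [hx, hx, mul_zero, mul_zero, add_zero]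
    · rfl
  have hpsiy0 : ∀ x : ℝ, psi a h l φ x 0 = 0 := by
    intro x
    have hk : ySeq a 0 ≤ (0:ℝ) ∧ (0:ℝ) < ySeq a (0 + 1) := by
      constructor
      · exact le_of_eq ySeq_zero
      · rw [ySeq_succ, ySeq_zero]
        have := pow_pos ha0 (0 + 1)
        linarith
    rw [psi_eq ha0 hk x, ySeq_zero]
    have hφzero : φ ((0 - 0) / a ^ (0 + 1)) = 0 := by
      have : ((0:ℝ) - 0) / a ^ (0 + 1) = 0 := by simp
      rw [this]
      exact h0φ 0 hε0p
    rw [hφzero]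
    simp [fSeq]
  refine ⟨?_, ?_, ?_, ?_, ?_⟩
  · -- continuity
    intro p hp
    rcases lt_or_eq_of_le hp.2.2 with hlt | heqy
    · exact (hcontAt p hp.2.1 hlt).continuousWithinAt
    · have := hcontTop p.1
      rw [← heqy] at this
      exact this.continuousWithinAt
  · -- boundary
    intro p hp
    rw [frontier_prod_eq, closure_Icc, closure_Icc, frontier_Icc h0pi.le,
      frontier_Icc hyInfpos.le] at hp
    rcases hp with ⟨_, hp2⟩ | ⟨hp1, _⟩
    · rcases hp2 with h2 | h2
      · rw [h2]; exact hpsiy0 p.1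
      · rw [show p.2 = yInf a from h2]
        exact psi_zero_of_ge ha0 ha1 le_rfl p.1
    · rcases hp1 with h1 | h1
      · rw [h1]; exact hpsixval 0 hfx0 p.2
      · rw [show p.1 = π from h1]; exact hpsixval π hfxpi p.2
  · -- smoothness
    intro p hp
    obtain ⟨k, hk⟩ := exists_index ha0 ha1 hp.2.1.le hp.2.2
    exact (((gAux_smooth hφsmooth k).contDiffAt).congr_of_eventuallyEq
      (psi_eventuallyEq_gAux ha0 ha1 hφ0 hφ1 hk)).contDiffWithinAt
  · -- Lipschitz
    intro k
    obtain ⟨δ, hδ, heq⟩ := psi_eq_gAux (h := h) (l := l) (φ := φ) ha0 ha1 hφ0 hφ1 k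
    have hg := gAux_smooth (a := a) (h := h) (l := l) hφsmooth k
    have hfd : Continuous (fderiv ℝ (gAux a h l φ k)) := hg.continuous_fderiv (by simp)
    have hcomp : IsCompact (Icc (0:ℝ) π ×ˢ Icc (ySeq a k) (ySeq a (k + 1))) :=
      isCompact_Icc.prod isCompact_Icc
    obtain ⟨C, hC⟩ := hcomp.exists_bound_of_continuousOn hfd.continuousOn
    refine ⟨‖C‖₊, ?_⟩
    have hlip : LipschitzOnWith ‖C‖₊ (gAux a h l φ k)
        (Icc (0:ℝ) π ×ˢ Icc (ySeq a k) (ySeq a (k + 1))) := by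
      apply Convex.lipschitzOnWith_of_nnnorm_fderiv_le
        (fun q _ => (hg.differentiable (by simp)) q) (fun q hq => ?_)
        ((convex_Icc _ _).prod (convex_Icc _ _))
      rw [← NNReal.coe_le_coe, coe_nnnorm, coe_nnnorm]
      calc ‖fderiv ℝ (gAux a h l φ k) q‖ ≤ C := hC q hq
        _ ≤ ‖C‖ := by rw [Real.norm_eq_abs]; exact le_abs_self C
    intro p hp q hq
    have e1 : psi a h l φ p.1 p.2 = gAux a h l φ k p := by
      simpa using heq p.1 p.2 ⟨by linarith [hp.2.1, hδ], by linarith [hp.2.2, hδ]⟩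
    have e2 : psi a h l φ q.1 q.2 = gAux a h l φ k q := by
      simpa using heq q.1 q.2 ⟨by linarith [hq.2.1, hδ], by linarith [hq.2.2, hδ]⟩
    simp only [e1, e2]
    exact hlip hp hq
  · -- uniform bound
    intro k x _ y hy1 _
    exact abs_psi_le ha0 hh0 hh1 hφ01 hy1 x


/-- Basic properties of `ψ`: continuity on the closed rectangle, vanishing on its
topological boundary, smoothness on the open rectangle, Lipschitz continuity on each
closed strip, and the uniform bound `|ψ(x,y)| ≤ 2 h^k` for `y ∈ [y_k, y_∞]`. -/
theorem psi_basic_properties (a h l : ℝ) (ha0 : 0 < a) (ha1 : a < 1) (hh0 : 0 < h) (hh1 : h < 1)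
    (hl0 : 0 < l) (hl1 : l < 1) (hlN : ∃ N : ℕ, 0 < N ∧ l = 1 / N)
    (φ : ℝ → ℝ) (hφsmooth : ContDiff ℝ (⊤ : ℕ∞) φ) (hφmono : Monotone φ)
    (hφ01 : ∀ t, φ t ∈ Set.Icc (0:ℝ) 1)
    (hφd0 : ∀ t, 0 ≤ deriv φ t) (hφd2 : ∀ t, deriv φ t ≤ 2)
    (hφ0 : ∃ ε > 0, ∀ t < ε, φ t = 0) (hφ1 : ∃ ε > 0, ∀ t > 1 - ε, φ t = 1) :
    ContinuousOn (fun p : ℝ × ℝ => psi a h l φ p.1 p.2) (Icc 0 π ×ˢ Icc 0 (yInf a)) ∧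
    (∀ p ∈ frontier (Icc 0 π ×ˢ Icc 0 (yInf a) : Set (ℝ × ℝ)), psi a h l φ p.1 p.2 = 0) ∧
    ContDiffOn ℝ (⊤ : ℕ∞) (fun p : ℝ × ℝ => psi a h l φ p.1 p.2)
      (Ioo 0 π ×ˢ Ioo 0 (yInf a)) ∧
    (∀ k : ℕ, ∃ K : NNReal, LipschitzOnWith K (fun p : ℝ × ℝ => psi a h l φ p.1 p.2)
      (Icc 0 π ×ˢ Icc (ySeq a k) (ySeq a (k + 1)))) ∧
    (∀ k : ℕ, ∀ x ∈ Icc (0:ℝ) π, ∀ y : ℝ, ySeq a k ≤ y → y ≤ yInf a →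
      |psi a h l φ x y| ≤ 2 * h ^ k) :=
  psi_basic_properties' a h l ha0 ha1 hh0 hh1 hl0 hl1 hlN φ hφsmooth hφmono hφ01 hφd0 hφd2 hφ0 hφ1

end StokesCounterexample
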